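/- arXiv:1702.06900 — 3 statements merged into one kernel-verified Lean document; each statement's English description precedes it below -/
import Mathlib

section
/- Consider a periodic schedule with pattern of duration T > 0 preceded by an initialization phase of duration c >= 0 and followed by a clean-up phase of duration c' >= 0, where the pattern executes l_k instances of application k and is repeated n times. Then the application efficiency rho_k(d_k) at completion time d_k = r_k + c + n*T + c' satisfies |rho_k(d_k) - l_k*w_k/T| <= ((c + c')*(l_k*w_k/T) + w_k) / (c + n*T + c'); in particular rho_k(d_k) tends to the periodic efficiency l_k*w_k/T as n tends to infinity. -/
open Filter

/-- for a periodic schedule of pattern duration `T` repeated `n` times with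
init phase `c` and clean-up phase `c'`, with `l` instances of the application per pattern
and `δ n ∈ {0,1}` extra instances, the efficiency
`ρ(d) = (n*l + δ n) * w / (d - r)` with `d = r + c + n*T + c'` satisfies
`|ρ(d) - l*w/T| ≤ ((c + c') * (l*w/T) + w) / (c + n*T + c')`; in particular it tends to
the periodic efficiency `l*w/T` as `n → ∞`. -/
theorem stmt3 (w T c c' r : ℝ) (l : ℕ) (δ : ℕ → ℝ)
    (hw : 0 < w) (hT : 0 < T) (hc : 0 ≤ c) (hc' : 0 ≤ c')
    (hδ : ∀ n, δ n = 0 ∨ δ n = 1) :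
    (∀ n : ℕ, 1 ≤ n →
      |((n : ℝ) * l + δ n) * w / ((r + c + n * T + c') - r) - (l : ℝ) * w / T| ≤
        ((c + c') * ((l : ℝ) * w / T) + w) / (c + n * T + c')) ∧
    Tendsto (fun n : ℕ => ((n : ℝ) * l + δ n) * w / ((r + c + n * T + c') - r))
      atTop (nhds ((l : ℝ) * w / T)) := by
  have hbound : ∀ n : ℕ, 1 ≤ n →
      |((n : ℝ) * l + δ n) * w / ((r + c + n * T + c') - r) - (l : ℝ) * w / T| ≤
        ((c + c') * ((l : ℝ) * w / T) + w) / (c + n * T + c') := by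
    intro n hn
    have hn1 : (1 : ℝ) ≤ (n : ℝ) := by exact_mod_cast hn
    have hD : 0 < c + (n : ℝ) * T + c' := by nlinarith
    have hsub : (r + c + (n : ℝ) * T + c') - r = c + (n : ℝ) * T + c' := by ring
    have key : ((n : ℝ) * l + δ n) * w / ((r + c + n * T + c') - r) - (l : ℝ) * w / T
        = (δ n * T - (l : ℝ) * (c + c')) * w / ((c + (n : ℝ) * T + c') * T) := by
      rw [hsub, div_sub_div _ _ hD.ne' hT.ne']
      congr 1
      ring
    rw [key, abs_div, abs_of_pos (mul_pos hD hT), div_le_div_iff₀ (mul_pos hD hT) hD]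
    have hl : (0 : ℝ) ≤ (l : ℝ) := Nat.cast_nonneg l
    have habs : |(δ n * T - (l : ℝ) * (c + c')) * w| ≤ (c + c') * ((l : ℝ) * w) + w * T := by
      rw [abs_le]
      rcases hδ n with h | h <;> rw [h] <;> constructor <;>
        nlinarith [mul_nonneg (mul_nonneg (Nat.cast_nonneg l : (0:ℝ) ≤ l) (add_nonneg hc hc')) hw.le, mul_pos hw hT]
    have hr : ((c + c') * ((l : ℝ) * w / T) + w) * ((c + (n : ℝ) * T + c') * T)
        = ((c + c') * ((l : ℝ) * w) + w * T) * (c + (n : ℝ) * T + c') := by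
      field_simp
    rw [hr]
    exact mul_le_mul_of_nonneg_right habs hD.le
  refine ⟨hbound, ?_⟩
  rw [tendsto_iff_norm_sub_tendsto_zero]
  have hDlim : Tendsto (fun n : ℕ => ((c + c') * ((l : ℝ) * w / T) + w) / (c + n * T + c'))
      atTop (nhds 0) := by
    apply Tendsto.div_atTop tendsto_const_nhds
    apply tendsto_atTop_add_const_right
    apply tendsto_atTop_add_const_left
    exact Tendsto.atTop_mul_const hT tendsto_natCast_atTop_atTop
  refine squeeze_zero_norm' ?_ hDlim
  filter_upwards [eventually_ge_atTop 1] with n hn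
  simpa [Real.norm_eq_abs] using hbound n hn
end

section
/- In a compact pattern, for each application k the intervals (sigma_k_i, sigmaIO_k_i) over which insertion of a new instance of application k could occur are pairwise disjoint and their union is contained in one period; hence the total number of events examined across all insertions of instances of application k by the insertion procedure is at most the total number of events in the pattern, 2 * sum_j l_j + 2. -/
/-- in a compact pattern the instances of each application `k` are
sequential, so the open gaps `(σIO k i, σ k (i+1))` into which a new instance of `k`
could be inserted are pairwise disjoint; hence the total number of events examined across
all insertions of instances of application `k` is at most the total number of events of
the pattern, `2 * ∑ j, l j + 2`. -/
theorem stmt11 (T : ℝ) (K : ℕ) (l : Fin K → ℕ) (w : Fin K → ℝ)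
    (σ σIO : (k : Fin K) → ℕ → ℝ)
    (hord : ∀ k i, σ k i + w k ≤ σIO k i ∧ σIO k i ≤ σ k (i + 1))
    (hw : ∀ k, 0 ≤ w k)
    (E : Finset ℝ) (hE : E.card = 2 * (∑ j, l j) + 2) (k : Fin K) :
    (∀ i j : ℕ, i ≠ j →
      Disjoint (Set.Ioo (σIO k i) (σ k (i + 1))) (Set.Ioo (σIO k j) (σ k (j + 1)))) ∧
    ∑ i ∈ Finset.range (l k),
        (E.filter (fun x => σIO k i < x ∧ x < σ k (i + 1))).card ≤
      2 * (∑ j, l j) + 2 := by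
  have mono : Monotone (σIO k) := by
    apply monotone_nat_of_le_succ
    intro n
    exact le_trans (hord k n).2
      (le_trans (le_add_of_nonneg_right (hw k)) (hord k (n + 1)).1)
  have key : ∀ i j : ℕ, i < j → σ k (i + 1) ≤ σIO k j := by
    intro i j hij
    calc σ k (i + 1) ≤ σ k (i + 1) + w k := le_add_of_nonneg_right (hw k)
      _ ≤ σIO k (i + 1) := (hord k (i + 1)).1
      _ ≤ σIO k j := mono hij
  have hdisj : ∀ i j : ℕ, i ≠ j →
      Disjoint (Set.Ioo (σIO k i) (σ k (i + 1))) (Set.Ioo (σIO k j) (σ k (j + 1))) := by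
    intro i j hij
    rcases lt_or_gt_of_ne hij with h | h
    · rw [Set.disjoint_left]
      rintro x ⟨_, hx2⟩ ⟨hx3, _⟩
      exact absurd (lt_trans (lt_of_lt_of_le hx2 (key i j h)) hx3) (lt_irrefl x)
    · rw [Set.disjoint_right]
      rintro x ⟨_, hx2⟩ ⟨hx3, _⟩
      exact absurd (lt_trans (lt_of_lt_of_le hx2 (key j i h)) hx3) (lt_irrefl x)
  refine ⟨hdisj, ?_⟩
  have hFdisj : ∀ i ∈ Finset.range (l k), ∀ j ∈ Finset.range (l k), i ≠ j →
      Disjoint (E.filter (fun x => σIO k i < x ∧ x < σ k (i + 1)))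
        (E.filter (fun x => σIO k j < x ∧ x < σ k (j + 1))) := by
    intro i _ j _ hij
    rw [Finset.disjoint_left]
    intro x hx hx'
    simp only [Finset.mem_filter] at hx hx'
    exact Set.disjoint_left.mp (hdisj i j hij) ⟨hx.2.1, hx.2.2⟩ ⟨hx'.2.1, hx'.2.2⟩
  rw [← Finset.card_biUnion hFdisj, ← hE]
  exact Finset.card_le_card (Finset.biUnion_subset.mpr fun i _ => Finset.filter_subset _ _)
end

section
/- If in a compact pattern every gap between consecutive instances of every application either has zero length or has the total bandwidth saturated at B throughout, then no application is schedulable (assuming w_k > 0 and vol_k > 0 for all k). -/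
open MeasureTheory

/-- if in a compact pattern every gap between consecutive instances of
every application either has zero (or negative) length or has the total bandwidth
saturated at `B` throughout, then no application is schedulable (the schedulability
integral of every instance is `0 < vol k`). -/
theorem stmt16 (K : ℕ) (p w vol : Fin K → ℝ) (b B : ℝ) (l : Fin K → ℕ)
    (σ σIO : (k : Fin K) → ℕ → ℝ) (load : ℝ → ℝ)
    (hb : 0 < b) (hB : 0 < B) (hp : ∀ k, 0 < p k) (hw : ∀ k, 0 < w k)
    (hvol : ∀ k, 0 < vol k)
    (hload : ∀ t, load t ≤ B)
    (hcompact : ∀ k, ∀ i < l k, σIO k i - w k ≤ σ k i + w k ∨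
      ∀ t ∈ Set.Icc (σ k i + w k) (σIO k i - w k), load t = B) :
    ∀ k, ¬ ∃ i < l k,
      vol k ≤ ∫ t in (σ k i + w k)..(σIO k i - w k), min (p k * b) (B - load t) := by
  intro k ⟨i, hi, hle⟩
  set a := σ k i + w k
  set c := σIO k i - w k
  have hnn : ∀ t, 0 ≤ min (p k * b) (B - load t) := fun t =>
    le_min (le_of_lt (mul_pos (hp k) hb)) (by linarith [hload t])
  rcases le_or_gt c a with hca | hac
  · have h0 : 0 ≤ ∫ t in c..a, min (p k * b) (B - load t) :=
      intervalIntegral.integral_nonneg hca (fun t _ => hnn t)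
    rw [intervalIntegral.integral_symm] at hle
    linarith [hvol k]
  · have hsat : ∀ t ∈ Set.Icc a c, load t = B := by
      rcases hcompact k i hi with h | h
      · exact absurd h (not_le.mpr hac)
      · exact h
    have h0 : (∫ t in a..c, min (p k * b) (B - load t)) = 0 := by
      have : ∀ t ∈ Set.uIcc a c, min (p k * b) (B - load t) = 0 := by
        intro t ht
        rw [Set.uIcc_of_le hac.le] at ht
        rw [hsat t ht]
        simp [min_eq_right (le_of_lt (mul_pos (hp k) hb))]
      calc (∫ t in a..c, min (p k * b) (B - load t)) = ∫ _t in a..c, (0:ℝ) :=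
            intervalIntegral.integral_congr this
        _ = 0 := by simp
    rw [h0] at hle
    linarith [hvol k]
end
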